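/- Let a, b, c ≥ 0 with c² ≥ a² + b², a,b,c ≤ 1, and let f_G(x) = (1-√(1-x²))/2. Assume k ≥ 1, ω ≥ 1, η ≥ 1, 0 ≤ α ≤ η/2, and f_G(b)^η ≥ k^ω f_G(a)^η with f_G(a) > 0. Then f_G(c)^α ≥ (1/2)^(α/η) f_G(a)^α + ((1+k^ω)^(α/η) - (1/2)^(α/η))/k^(ωα/η) · f_G(b)^α. -/

import Mathlib

open Real Set NNReal

lemma superadd (v p : ℝ) (hv : 0 ≤ v) (hp : 1 ≤ p) : 1 + v ^ p ≤ (1 + v) ^ p := by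
  have h := NNReal.add_rpow_le_rpow_add (1 : ℝ≥0) (⟨v, hv⟩ : ℝ≥0) hp
  have h2 := (NNReal.coe_le_coe).2 h
  push_cast [NNReal.coe_rpow] at h2
  simpa using (show (1:ℝ) ^ p + v ^ p ≤ (1 + v) ^ p from h2)

lemma key (s K u : ℝ) (hs0 : 0 ≤ s) (hs : s ≤ 1/2) (hK : 1 ≤ K) (hu : K ≤ u) :
    (1/2 : ℝ) ^ s + ((1 + K) ^ s - (1/2 : ℝ) ^ s) / K ^ s * u ^ s ≤ (1 + u) ^ s := by
  have hK0 : (0:ℝ) < K := lt_of_lt_of_le one_pos hK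
  have hKs : (0:ℝ) < K ^ s := Real.rpow_pos_of_pos hK0 s
  rcases hs0.eq_or_lt with h0 | hspos
  · simp [← h0]
  set C : ℝ := ((1 + K) ^ s - (1/2 : ℝ) ^ s) / K ^ s with hC
  have h1K : (0:ℝ) < 1 + K := by linarith
  -- C ≤ (K/(1+K))^(1-s)
  have hCb : C ≤ (K / (1 + K)) ^ (1 - s) := by
    rw [hC, div_le_iff₀ hKs, Real.div_rpow hK0.le h1K.le]
    have e1 : K ^ (1 - s) / (1 + K) ^ (1 - s) * K ^ s = K * (1 + K) ^ (s - 1) := by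
      rw [div_mul_eq_mul_div, ← Real.rpow_add hK0, sub_add_cancel, Real.rpow_one,
        show s - 1 = -(1-s) by ring, Real.rpow_neg h1K.le, div_eq_mul_inv]
    rw [e1]
    have e2 : (1 + K) ^ s = (1 + K) ^ (s - 1) * (1 + K) := by
      rw [← Real.rpow_add_one h1K.ne' (s - 1), sub_add_cancel]
    have e3 : (1 + K) ^ (s - 1) ≤ (1/2 : ℝ) ^ s := by
      have h4 : (1 + K) ^ (s - 1) ≤ (2:ℝ) ^ (s - 1) :=
        Real.rpow_le_rpow_of_nonpos two_pos (by linarith) (by linarith)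
      have h5 : (2:ℝ) ^ (s - 1) = (1/2 : ℝ) ^ (1 - s) := by
        rw [show s - 1 = -(1-s) by ring, Real.rpow_neg two_pos.le, one_div,
          Real.inv_rpow two_pos.le]
      have h6 : (1/2 : ℝ) ^ (1 - s) ≤ (1/2 : ℝ) ^ s :=
        Real.rpow_le_rpow_of_exponent_ge (by norm_num) (by norm_num) (by linarith)
      calc (1 + K) ^ (s - 1) ≤ (2:ℝ) ^ (s - 1) := h4
        _ = (1/2 : ℝ) ^ (1 - s) := h5
        _ ≤ (1/2 : ℝ) ^ s := h6
    nlinarith [Real.rpow_pos_of_pos h1K (s-1)]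
  -- monotonicity of f(v) = (1+v)^s - C v^s on [K, ∞)
  set f : ℝ → ℝ := fun v => (1 + v) ^ s - C * v ^ s with hf
  have hmono : MonotoneOn f (Ici K) := by
    apply monotoneOn_of_hasDerivWithinAt_nonneg (convex_Ici K)
      (f' := fun v => 1 * s * (1 + v) ^ (s - 1) - C * (s * v ^ (s - 1)))
    · apply ContinuousOn.sub
      · apply ContinuousOn.rpow_const (by fun_prop)
        intro x hx; left
        have : (1:ℝ) ≤ x := le_trans hK hx
        positivity
      · apply ContinuousOn.mul continuousOn_const
        apply ContinuousOn.rpow_const continuousOn_id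
        intro x hx; left
        have : (1:ℝ) ≤ x := le_trans hK hx
        positivity
    · intro v hv
      rw [interior_Ici] at hv
      have hv1 : (1:ℝ) < v := lt_of_le_of_lt hK hv
      have h1 : HasDerivAt (fun v : ℝ => (1 + v) ^ s) (1 * s * (1 + v) ^ (s - 1)) v := by
        exact (HasDerivAt.const_add 1 (hasDerivAt_id v)).rpow_const (Or.inl (by positivity))
      have h2 : HasDerivAt (fun v : ℝ => C * v ^ s) (C * (s * v ^ (s - 1))) v := by
        exact (Real.hasDerivAt_rpow_const (Or.inl (by positivity))).const_mul C
      exact ((h1.sub h2).hasDerivWithinAt)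
    · intro v hv
      rw [interior_Ici] at hv
      have hvK : K < v := hv
      have hv0 : (0:ℝ) < v := lt_trans hK0 hvK
      have h1v : (0:ℝ) < 1 + v := by linarith
      have hvs1 : (0:ℝ) < v ^ (s - 1) := Real.rpow_pos_of_pos hv0 _
      have step1 : (K / (1 + K)) ^ (1 - s) ≤ (v / (1 + v)) ^ (1 - s) := by
        apply Real.rpow_le_rpow (by positivity) _ (by linarith)
        rw [div_le_div_iff₀ h1K h1v]; nlinarith
      have step2 : (v / (1 + v)) ^ (1 - s) * v ^ (s - 1) = (1 + v) ^ (s - 1) := by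
        rw [Real.div_rpow hv0.le h1v.le, div_mul_eq_mul_div, ← Real.rpow_add hv0,
          sub_add_sub_cancel, sub_self, Real.rpow_zero,
          show (1 - s : ℝ) = -(s - 1) by ring, Real.rpow_neg h1v.le, one_div, inv_inv]
      have hCv : C * v ^ (s - 1) ≤ (1 + v) ^ (s - 1) := by
        calc C * v ^ (s - 1) ≤ (v / (1 + v)) ^ (1 - s) * v ^ (s - 1) := by
              exact mul_le_mul_of_nonneg_right (le_trans hCb step1) hvs1.le
          _ = (1 + v) ^ (s - 1) := step2
      have : C * (s * v ^ (s - 1)) = s * (C * v ^ (s - 1)) := by ring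
      rw [this, one_mul]
      have := mul_le_mul_of_nonneg_left hCv hspos.le
      linarith
  have hfk := hmono (self_mem_Ici) hu hu
  have hfK : f K = (1 + K) ^ s - ((1 + K) ^ s - (1/2:ℝ) ^ s) := by
    rw [hf]; simp only; rw [hC, div_mul_cancel₀ _ hKs.ne']
  have : f K = (1/2:ℝ) ^ s := by rw [hfK]; ring
  have hfu : f u = (1 + u) ^ s - C * u ^ s := rfl
  rw [this, hfu] at hfk
  linarith

open Real Set

lemma step1 (a b c : ℝ) (ha0 : 0 ≤ a) (hb0 : 0 ≤ b) (hc0 : 0 ≤ c)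
    (ha1 : a ≤ 1) (hb1 : b ≤ 1) (hc1 : c ≤ 1) (hckw : a^2 + b^2 ≤ c^2) :
    (1 - Real.sqrt (1 - a^2))/2 + (1 - Real.sqrt (1 - b^2))/2
      ≤ (1 - Real.sqrt (1 - c^2))/2 := by
  set s := Real.sqrt (1 - a^2) with hsdef
  set t := Real.sqrt (1 - b^2) with htdef
  set u := Real.sqrt (1 - c^2) with hudef
  have ha2 : (0:ℝ) ≤ 1 - a^2 := by nlinarith
  have hb2 : (0:ℝ) ≤ 1 - b^2 := by nlinarith
  have hc2 : (0:ℝ) ≤ 1 - c^2 := by nlinarith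
  have hs2 : s^2 = 1 - a^2 := Real.sq_sqrt ha2
  have ht2 : t^2 = 1 - b^2 := Real.sq_sqrt hb2
  have hu2 : u^2 = 1 - c^2 := Real.sq_sqrt hc2
  have hs0 : 0 ≤ s := Real.sqrt_nonneg _
  have ht0 : 0 ≤ t := Real.sqrt_nonneg _
  have hu0 : 0 ≤ u := Real.sqrt_nonneg _
  have hstu : u ≤ s * t := by nlinarith [mul_nonneg hs0 ht0, sq_nonneg (a*b)]
  have : 1 + u ≤ s + t := by nlinarith [sq_nonneg (s + t - 1 - u)]
  linarith

theorem stmt_10 (a b c k ω η α : ℝ)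
    (ha0 : 0 ≤ a) (hb0 : 0 ≤ b) (hc0 : 0 ≤ c)
    (ha1 : a ≤ 1) (hb1 : b ≤ 1) (hc1 : c ≤ 1)
    (hckw : c ^ 2 ≥ a ^ 2 + b ^ 2)
    (hk : 1 ≤ k) (hω : 1 ≤ ω) (hη : 1 ≤ η) (hα0 : 0 ≤ α) (hα : α ≤ η / 2)
    (fG : ℝ → ℝ)
    (hfG : ∀ x : ℝ, fG x = (1 - Real.sqrt (1 - x ^ 2)) / 2)
    (hfa : 0 < fG a) (hcond : fG b ^ η ≥ k ^ ω * fG a ^ η) :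
    fG c ^ α ≥ (1 / 2 : ℝ) ^ (α / η) * fG a ^ α +
      ((1 + k ^ ω) ^ (α / η) - (1 / 2 : ℝ) ^ (α / η)) / k ^ (ω * α / η) * fG b ^ α := by
  have hη0 : (0:ℝ) < η := lt_of_lt_of_le one_pos hη
  have hk0 : (0:ℝ) < k := lt_of_lt_of_le one_pos hk
  have hy0 : 0 ≤ fG b := by
    rw [hfG]
    have := Real.sqrt_le_one.2 (show 1 - b^2 ≤ 1 by nlinarith)
    linarith
  have hA : fG a + fG b ≤ fG c := by
    rw [hfG a, hfG b, hfG c]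
    exact step1 a b c ha0 hb0 hc0 ha1 hb1 hc1 hckw
  clear hfG
  generalize hgx : fG a = x at hfa hcond hA ⊢
  generalize hgy : fG b = y at hcond hA hy0 ⊢
  generalize hgz : fG c = z at hA ⊢
  clear hgx hgy hgz ha0 hb0 hc0 ha1 hb1 hc1 hckw
  set K := k ^ ω with hKdef
  set s := α / η with hsdef
  have hK1 : (1:ℝ) ≤ K := by
    rw [hKdef]
    calc (1:ℝ) = 1 ^ ω := (Real.one_rpow ω).symm
      _ ≤ k ^ ω := Real.rpow_le_rpow zero_le_one hk (by linarith)
  have hK0 : (0:ℝ) < K := lt_of_lt_of_le one_pos hK1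
  have hs0 : 0 ≤ s := div_nonneg hα0 hη0.le
  have hs12 : s ≤ 1/2 := by
    rw [hsdef, div_le_iff₀ hη0]; linarith
  have hxη : (0:ℝ) < x ^ η := Real.rpow_pos_of_pos hfa η
  have hy : (0:ℝ) < y := by
    rcases hy0.eq_or_lt with h | h
    · rw [← h, Real.zero_rpow hη0.ne'] at hcond
      nlinarith [mul_pos hK0 hxη]
    · exact h
  set t := y / x with htdef
  have ht0 : 0 < t := div_pos hy hfa
  set u := y ^ η / x ^ η with hudef
  have hu0 : 0 < u := div_pos (Real.rpow_pos_of_pos hy η) hxη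
  have hKu : K ≤ u := by
    rw [hudef, le_div_iff₀ hxη]; linarith [hcond]
  have hkey := key s K u hs0 hs12 hK1 hKu
  have htη : t ^ η = u := by
    rw [htdef, hudef, Real.div_rpow hy.le hfa.le]
  have hxy : x + y = x * (1 + t) := by
    rw [htdef]; field_simp
  have hηs : η * s = α := by
    rw [hsdef]; field_simp
  have e1 : (x + y) ^ α = x ^ α * (1 + t) ^ α := by
    rw [hxy, Real.mul_rpow hfa.le (by linarith)]
  have e2 : (1 + t) ^ α = ((1 + t) ^ η) ^ s := by
    rw [← Real.rpow_mul (by linarith : (0:ℝ) ≤ 1 + t) η s, hηs]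
  have e3 : (1 + u) ^ s ≤ ((1 + t) ^ η) ^ s := by
    apply Real.rpow_le_rpow (by linarith) _ hs0
    have := superadd t η ht0.le hη
    rw [htη] at this; exact this
  have e4 : x ^ α * u ^ s = y ^ α := by
    rw [hudef, Real.div_rpow (Real.rpow_pos_of_pos hy η).le hxη.le,
      ← Real.rpow_mul hy.le, ← Real.rpow_mul hfa.le, hηs]
    field_simp
  have e5 : k ^ (ω * α / η) = K ^ s := by
    rw [hKdef, ← Real.rpow_mul hk0.le, hsdef, mul_div_assoc]
  rw [ge_iff_le, e5]
  have hxα : (0:ℝ) < x ^ α := Real.rpow_pos_of_pos hfa α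
  have hzα : (x + y) ^ α ≤ z ^ α :=
    Real.rpow_le_rpow (by positivity) hA (by linarith) |>.trans_eq rfl
  have chain : (1/2:ℝ) ^ s * x ^ α + ((1 + K) ^ s - (1/2:ℝ) ^ s) / K ^ s * y ^ α
      ≤ (x + y) ^ α := by
    rw [e1, e2, ← e4]
    have h6 : (1/2:ℝ) ^ s + ((1 + K) ^ s - (1/2:ℝ) ^ s) / K ^ s * u ^ s
        ≤ ((1 + t) ^ η) ^ s := le_trans hkey e3
    have h7 := mul_le_mul_of_nonneg_left h6 hxα.le
    linarith [h7]
  have goal2 : (1/2:ℝ) ^ s * x ^ α +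
      ((1 + K) ^ s - (1/2:ℝ) ^ s) / K ^ s * y ^ α ≤ z ^ α :=
    le_trans chain hzα
  convert goal2 using 2
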